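/- Fix real numbers P̄ > 0 and N0 > 0. For λ > 0, set N(λ) = λ·P̄/(4π·N0) and define C̄(λ) = π · [ log(1 + λ·N(λ))/λ² + N(λ)²·log( N(λ)·λ/(1 + N(λ)·λ) ) + N(λ)/λ ]. Then lim_{λ→0⁺} C̄(λ) = P̄/(2N0). -/

import Mathlib

open Real Filter

-- h(x) = log(1+x)/x + x*log(x/(1+x)) → 1 as x → 0⁺
lemma aux_h_tendsto :
    Tendsto (fun x : ℝ => Real.log (1 + x) / x + x * Real.log (x / (1 + x)))
      (nhdsWithin 0 (Set.Ioi 0)) (nhds 1) := by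
  have h1 : Tendsto (fun x : ℝ => Real.log (1 + x) / x) (nhdsWithin 0 (Set.Ioi 0)) (nhds 1) := by
    have hd : HasDerivAt (fun x : ℝ => Real.log (1 + x)) 1 0 := by
      have := (Real.hasDerivAt_log (by norm_num : (1:ℝ) + 0 ≠ 0)).comp 0
        ((hasDerivAt_const 0 (1:ℝ)).add (hasDerivAt_id 0))
      exact this.congr_deriv (by norm_num)
    have := hd.hasDerivWithinAt (s := Set.Ioi 0)
    have := (hasDerivWithinAt_iff_tendsto_slope.mp this)
    have h0 : (0:ℝ) ∉ Set.Ioi (0:ℝ) := by simp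
    rw [Set.diff_eq, Set.inter_eq_self_of_subset_left] at this
    · refine this.congr' ?_
      filter_upwards [self_mem_nhdsWithin] with x hx
      simp [slope_def_field]
    · intro x hx; simp at *; exact hx.ne'
  have h2 : Tendsto (fun x : ℝ => x * Real.log (x / (1 + x))) (nhdsWithin 0 (Set.Ioi 0)) (nhds 0) := by
    have ha : Tendsto (fun x : ℝ => x * Real.log x) (nhdsWithin 0 (Set.Ioi 0)) (nhds 0) := by
      have := (Real.continuous_mul_log.tendsto 0).mono_left
        (nhdsWithin_le_nhds (s := Set.Ioi 0))
      simpa using this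
    have hb : Tendsto (fun x : ℝ => x * Real.log (1 + x)) (nhdsWithin 0 (Set.Ioi 0)) (nhds 0) := by
      have : ContinuousAt (fun x : ℝ => x * Real.log (1 + x)) 0 := by
        have : ContinuousAt (fun x : ℝ => Real.log (1 + x)) 0 :=
          (Real.continuousAt_log (by norm_num)).comp (by fun_prop)
        exact continuousAt_id.mul this
      simpa using this.continuousWithinAt.tendsto
    have := ha.sub hb
    rw [sub_zero] at this
    refine this.congr' ?_
    filter_upwards [self_mem_nhdsWithin] with x hx
    have hx0 : (0:ℝ) < x := hx
    rw [Real.log_div hx0.ne' (by positivity)]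
    ring
  simpa using h1.add h2

/-- Remark 1 of the paper: as the wavelength `λ → 0⁺`, the closed-form space-normalized
capacity of the two-dimensional deployment (Eq. (22), with `N(λ) = λP̄/(4πN0)`) converges
to `P̄/(2N0)`. -/
theorem normalized_capacity_limit_2D (Pbar N0 : ℝ) (hP : 0 < Pbar) (hN0 : 0 < N0) :
    Tendsto (fun lam : ℝ =>
        π * (Real.log (1 + lam * (lam * Pbar / (4 * π * N0))) / lam ^ 2
          + (lam * Pbar / (4 * π * N0)) ^ 2 *
              Real.log ((lam * Pbar / (4 * π * N0)) * lam / (1 + (lam * Pbar / (4 * π * N0)) * lam))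
          + (lam * Pbar / (4 * π * N0)) / lam))
      (nhdsWithin 0 (Set.Ioi 0)) (nhds (Pbar / (2 * N0))) := by
  have hπ : (0:ℝ) < π := Real.pi_pos
  set c := Pbar / (4 * π * N0) with hc
  have hcpos : 0 < c := by rw [hc]; positivity
  have hmap : Tendsto (fun lam : ℝ => c * lam ^ 2) (nhdsWithin 0 (Set.Ioi 0))
      (nhdsWithin 0 (Set.Ioi 0)) := by
    apply tendsto_nhdsWithin_of_tendsto_nhds_of_eventually_within
    · have : Tendsto (fun lam : ℝ => c * lam ^ 2) (nhds 0) (nhds (c * 0 ^ 2)) := by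
        exact (continuous_const.mul (continuous_pow 2)).tendsto 0
      simpa using this.mono_left (nhdsWithin_le_nhds (s := Set.Ioi 0))
    · filter_upwards [self_mem_nhdsWithin] with x hx
      exact Set.mem_Ioi.mpr (mul_pos hcpos (pow_pos hx 2))
  have key := aux_h_tendsto.comp hmap
  have lim : Tendsto (fun lam : ℝ =>
      π * c * (Real.log (1 + c * lam ^ 2) / (c * lam ^ 2)
        + (c * lam ^ 2) * Real.log ((c * lam ^ 2) / (1 + c * lam ^ 2))) + π * c)
      (nhdsWithin 0 (Set.Ioi 0)) (nhds (π * c * 1 + π * c)) :=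
    (tendsto_const_nhds.mul key).add tendsto_const_nhds
  have hval : Pbar / (2 * N0) = π * c * 1 + π * c := by
    rw [hc]; field_simp; ring
  rw [hval]
  refine Tendsto.congr' ?_ lim
  filter_upwards [self_mem_nhdsWithin] with lam hlam
  have hl : (0:ℝ) < lam := hlam
  have e1 : 1 + lam * (lam * Pbar / (4 * π * N0)) = 1 + c * lam ^ 2 := by rw [hc]; ring
  have e2 : (lam * Pbar / (4 * π * N0)) * lam = c * lam ^ 2 := by rw [hc]; ring
  have e3 : lam * Pbar / (4 * π * N0) = c * lam := by rw [hc]; ring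
  rw [e1, e2, e3]
  have hx : (0:ℝ) < c * lam ^ 2 := mul_pos hcpos (pow_pos hl 2)
  field_simp
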